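/- For φ, ψ ∈ 𝒮(ℝ^n), the transform V_φ intertwines the standard quantization with the phase-space quantization: (x_j/2 + iℏ∂_{p_j})(V_φψ) = V_φ(x_jψ) and (p_j/2 − iℏ∂_{x_j})(V_φψ) = V_φ(−iℏ∂_{x_j}ψ) for each j. -/

import Mathlib

open Complex Real MeasureTheory

/-- The transform `V_φψ(x,p) = e^{−ip·x/(2ℏ)} (2πℏ)^{−n/2} ∫ e^{(i/ℏ)p·(x−x')} φ(x−x')ψ(x')dx'`. -/
noncomputable def Vphi (n : ℕ) (hbar : ℝ) (φ ψ : (Fin n → ℝ) → ℂ)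
    (z : (Fin n → ℝ) × (Fin n → ℝ)) : ℂ :=
  Complex.exp (-(I / (2 * (hbar : ℂ))) * ((∑ i, z.2 i * z.1 i : ℝ) : ℂ)) *
    ((((1 / (2 * π * hbar)) ^ ((n : ℝ) / 2) : ℝ) : ℂ) *
      ∫ x' : Fin n → ℝ,
        Complex.exp ((I / (hbar : ℂ)) * ((∑ i, z.2 i * (z.1 i - x' i) : ℝ) : ℂ))
          * φ (z.1 - x') * ψ x')

namespace VphiAux

open ContinuousLinearMap

variable {n : ℕ}

/-- `(v,w) ↦ ∑ i, y i * w i` as a continuous linear map. -/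
noncomputable def Tlin (n : ℕ) (y : Fin n → ℝ) :
    ((Fin n → ℝ) × (Fin n → ℝ)) →L[ℝ] ℝ :=
  ∑ i, y i • ((proj i).comp (snd ℝ (Fin n → ℝ) (Fin n → ℝ)))

lemma Tlin_apply (y : Fin n → ℝ) (v : (Fin n → ℝ) × (Fin n → ℝ)) :
    Tlin n y v = ∑ i, y i * v.2 i := by
  simp [Tlin]

lemma Tlin_apply_single (y : Fin n → ℝ) (j : Fin n) :
    Tlin n y ((0 : Fin n → ℝ), Pi.single j 1) = y j := by
  simp [Tlin_apply, Pi.single_apply, mul_ite, Finset.sum_ite_eq']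

lemma Tlin_apply_single' (y : Fin n → ℝ) (j : Fin n) :
    Tlin n y (Pi.single j 1, (0 : Fin n → ℝ)) = 0 := by
  simp [Tlin_apply]

lemma norm_Tlin_apply_le (y : Fin n → ℝ) (v : (Fin n → ℝ) × (Fin n → ℝ)) :
    ‖Tlin n y v‖ ≤ (∑ i, |y i|) * ‖v‖ := by
  rw [Tlin_apply, Finset.sum_mul]
  refine (norm_sum_le _ _).trans (Finset.sum_le_sum fun i _ => ?_)
  rw [Real.norm_eq_abs, abs_mul]
  refine mul_le_mul_of_nonneg_left ?_ (abs_nonneg _)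
  calc |v.2 i| ≤ ‖v.2‖ := norm_le_pi_norm v.2 i
    _ ≤ ‖v‖ := norm_snd_le v

lemma hasFDerivAt_S (y : Fin n → ℝ) (z : (Fin n → ℝ) × (Fin n → ℝ)) :
    HasFDerivAt (fun z : (Fin n → ℝ) × (Fin n → ℝ) => ∑ i, z.2 i * y i)
      (Tlin n y) z := by
  refine HasFDerivAt.fun_sum (fun i _ => ?_)
  exact (((proj i).comp (snd ℝ (Fin n → ℝ) (Fin n → ℝ))).hasFDerivAt).mul_const (y i)

/-- derivative of `z ↦ ∑ i, z.2 i * z.1 i`. -/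
noncomputable def Blin (n : ℕ) (z : (Fin n → ℝ) × (Fin n → ℝ)) :
    ((Fin n → ℝ) × (Fin n → ℝ)) →L[ℝ] ℝ :=
  ∑ i, (z.2 i • ((proj i).comp (fst ℝ (Fin n → ℝ) (Fin n → ℝ)))
      + z.1 i • ((proj i).comp (snd ℝ (Fin n → ℝ) (Fin n → ℝ))))

lemma hasFDerivAt_B (z : (Fin n → ℝ) × (Fin n → ℝ)) :
    HasFDerivAt (fun z : (Fin n → ℝ) × (Fin n → ℝ) => ∑ i, z.2 i * z.1 i)
      (Blin n z) z := by
  refine HasFDerivAt.fun_sum (fun i _ => ?_)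
  exact (((proj i).comp (snd ℝ (Fin n → ℝ) (Fin n → ℝ))).hasFDerivAt).mul
    (((proj i).comp (fst ℝ (Fin n → ℝ) (Fin n → ℝ))).hasFDerivAt)

lemma Blin_apply_single (z : (Fin n → ℝ) × (Fin n → ℝ)) (j : Fin n) :
    Blin n z ((0 : Fin n → ℝ), Pi.single j 1) = z.1 j := by
  simp [Blin, Pi.single_apply, mul_ite, Finset.sum_ite_eq']

lemma Blin_apply_single' (z : (Fin n → ℝ) × (Fin n → ℝ)) (j : Fin n) :
    Blin n z (Pi.single j 1, (0 : Fin n → ℝ)) = z.2 j := by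
  simp [Blin, Pi.single_apply, mul_ite, Finset.sum_ite_eq']

/-- Substitution `x' = z.1 - y` in the `Vphi` integral. -/
lemma Vphi_eq (n : ℕ) (hbar : ℝ) (φ ψ : (Fin n → ℝ) → ℂ)
    (z : (Fin n → ℝ) × (Fin n → ℝ)) :
    Vphi n hbar φ ψ z =
      Complex.exp (-(I / (2 * (hbar : ℂ))) * ((∑ i, z.2 i * z.1 i : ℝ) : ℂ)) *
        ((((1 / (2 * π * hbar)) ^ ((n : ℝ) / 2) : ℝ) : ℂ) *
          ∫ y : Fin n → ℝ,
            φ y * (Complex.exp ((I / (hbar : ℂ)) * ((∑ i, z.2 i * y i : ℝ) : ℂ)) * ψ (z.1 - y))) := by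
  unfold Vphi
  congr 2
  rw [← MeasureTheory.integral_sub_left_eq_self
    (fun y : Fin n → ℝ => φ y *
      (Complex.exp ((I / (hbar : ℂ)) * ((∑ i, z.2 i * y i : ℝ) : ℂ)) * ψ (z.1 - y)))
    volume z.1]
  refine congrArg (fun f : (Fin n → ℝ) → ℂ => ∫ x', f x') (funext fun x' => ?_)
  simp only [sub_sub_cancel, Pi.sub_apply]
  ring


noncomputable def Fint (hbar : ℝ) (φ ψ : (Fin n → ℝ) → ℂ)
    (z : (Fin n → ℝ) × (Fin n → ℝ)) (y : Fin n → ℝ) : ℂ :=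
  φ y * (Complex.exp ((I / (hbar : ℂ)) * ((∑ i, z.2 i * y i : ℝ) : ℂ)) * ψ (z.1 - y))

noncomputable def Fder (hbar : ℝ) (φ ψ : (Fin n → ℝ) → ℂ)
    (z : (Fin n → ℝ) × (Fin n → ℝ)) (y : Fin n → ℝ) :
    ((Fin n → ℝ) × (Fin n → ℝ)) →L[ℝ] ℂ :=
  φ y • (Complex.exp ((I / (hbar : ℂ)) * ((∑ i, z.2 i * y i : ℝ) : ℂ)) •
      ((fderiv ℝ ψ (z.1 - y)).comp (fst ℝ (Fin n → ℝ) (Fin n → ℝ)))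
    + ψ (z.1 - y) • (Complex.exp ((I / (hbar : ℂ)) * ((∑ i, z.2 i * y i : ℝ) : ℂ)) •
      ((I / (hbar : ℂ)) • (Complex.ofRealCLM.comp (Tlin n y)))))

lemma hasFDerivAt_Fint (hbar : ℝ) (φ : (Fin n → ℝ) → ℂ) (ψ : SchwartzMap (Fin n → ℝ) ℂ)
    (z : (Fin n → ℝ) × (Fin n → ℝ)) (y : Fin n → ℝ) :
    HasFDerivAt (fun z => Fint hbar φ (⇑ψ) z y) (Fder hbar φ (⇑ψ) z y) z := by
  have h1 := hasFDerivAt_S y z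
  have h2 := (Complex.ofRealCLM.hasFDerivAt (x := (∑ i, z.2 i * y i : ℝ))).comp z h1
  have h3 := h2.const_mul (I / (hbar : ℂ))
  have h4 := h3.cexp
  have hi : HasFDerivAt (fun z : (Fin n → ℝ) × (Fin n → ℝ) => z.1 - y)
      (fst ℝ (Fin n → ℝ) (Fin n → ℝ)) z := hasFDerivAt_fst.sub_const y
  have h5 : HasFDerivAt (fun z : (Fin n → ℝ) × (Fin n → ℝ) => ψ (z.1 - y))
      ((fderiv ℝ (⇑ψ) (z.1 - y)).comp (fst ℝ (Fin n → ℝ) (Fin n → ℝ))) z :=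
    (ψ.differentiableAt.hasFDerivAt).comp z hi
  exact (h4.mul h5).const_mul (φ y)

lemma norm_exp_I_mul_ofReal (h r : ℝ) : ‖Complex.exp ((I / (h : ℂ)) * (r : ℂ))‖ = 1 := by
  rw [Complex.norm_exp]
  have : ((I / (h : ℂ)) * (r : ℂ)).re = 0 := by
    simp [div_eq_mul_inv, ← Complex.ofReal_inv]
  rw [this, Real.exp_zero]

lemma key (hbar : ℝ) (hh : 0 < hbar) (φ ψ : SchwartzMap (Fin n → ℝ) ℂ)
    (z₀ : (Fin n → ℝ) × (Fin n → ℝ)) :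
    Integrable (Fder hbar (⇑φ) (⇑ψ) z₀) volume ∧
    Integrable (Fint hbar (⇑φ) (⇑ψ) z₀) volume ∧
    (∀ j : Fin n, Integrable (fun y => ((y j : ℝ) : ℂ) * Fint hbar (⇑φ) (⇑ψ) z₀ y) volume) ∧
    HasFDerivAt (fun z => ∫ y, Fint hbar (⇑φ) (⇑ψ) z y)
      (∫ y, Fder hbar (⇑φ) (⇑ψ) z₀ y) z₀ := by
  obtain ⟨Mψ, hMψ0, hMψ⟩ := ψ.decay 0 0
  have hψb : ∀ x, ‖ψ x‖ ≤ Mψ := fun x => by simpa using hMψ x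
  obtain ⟨Md, hMd0, hMd⟩ := ψ.decay 0 1
  have hdψb : ∀ x, ‖fderiv ℝ (⇑ψ) x‖ ≤ Md := by
    intro x
    have := hMd x
    simp only [pow_zero, one_mul] at this
    rwa [← norm_iteratedFDeriv_fderiv, norm_iteratedFDeriv_zero] at this
  set bound : (Fin n → ℝ) → ℝ :=
    fun y => Md * ‖φ y‖ + (Mψ * hbar⁻¹) * ∑ i, (|y i| * ‖φ y‖) with hbound_def
  -- continuity facts
  have contφ := φ.continuous
  have contψ := ψ.continuous
  have contdψ : Continuous (fderiv ℝ (⇑ψ)) :=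
    (ψ.smooth ⊤).continuous_fderiv (by simp)
  have contS : ∀ z : (Fin n → ℝ) × (Fin n → ℝ),
      Continuous (fun y : Fin n → ℝ =>
        Complex.exp ((I / (hbar : ℂ)) * ((∑ i, z.2 i * y i : ℝ) : ℂ))) := by
    intro z
    exact Complex.continuous_exp.comp (continuous_const.mul
      (Complex.continuous_ofReal.comp
        (continuous_finset_sum _ fun i _ => continuous_const.mul (continuous_apply i))))
  have contF : ∀ z, Continuous (fun y => Fint hbar (⇑φ) (⇑ψ) z y) := by
    intro z
    exact contφ.mul ((contS z).mul (contψ.comp (continuous_const.sub continuous_id)))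
  have contF' : Continuous (fun y => Fder hbar (⇑φ) (⇑ψ) z₀ y) := by
    unfold Fder
    apply contφ.smul
    apply Continuous.add
    · exact (contS z₀).smul
        ((contdψ.comp (continuous_const.sub continuous_id)).clm_comp continuous_const)
    · apply (contψ.comp (continuous_const.sub continuous_id)).smul
      apply (contS z₀).smul
      refine Continuous.const_smul (g := fun y => ofRealCLM.comp (Tlin n y)) ?_ (I / (hbar : ℂ))
      apply Continuous.clm_comp continuous_const
      exact continuous_finset_sum _ fun i _ => (continuous_apply i).smul continuous_const
  -- the uniform bound
  have h_bound : ∀ y : Fin n → ℝ, ∀ z : (Fin n → ℝ) × (Fin n → ℝ),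
      ‖Fder hbar (⇑φ) (⇑ψ) z y‖ ≤ bound y := by
    intro y z
    apply ContinuousLinearMap.opNorm_le_bound
    · have : (0:ℝ) ≤ ∑ i, (|y i| * ‖φ y‖) :=
        Finset.sum_nonneg fun i _ => mul_nonneg (abs_nonneg _) (norm_nonneg _)
      have h1 : (0:ℝ) ≤ Mψ * hbar⁻¹ := mul_nonneg hMψ0.le (inv_nonneg.2 hh.le)
      positivity
    intro v
    have happ : Fder hbar (⇑φ) (⇑ψ) z y v =
        φ y * (Complex.exp ((I / (hbar : ℂ)) * ((∑ i, z.2 i * y i : ℝ) : ℂ)) *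
            (fderiv ℝ (⇑ψ) (z.1 - y) v.1)
          + ψ (z.1 - y) * (Complex.exp ((I / (hbar : ℂ)) * ((∑ i, z.2 i * y i : ℝ) : ℂ)) *
            ((I / (hbar : ℂ)) * ((Tlin n y v : ℝ) : ℂ)))) := by
      simp [Fder, smul_eq_mul, mul_add]
    rw [happ]
    have hnormI : ‖(I / (hbar : ℂ))‖ = hbar⁻¹ := by
      rw [norm_div, Complex.norm_real, Real.norm_eq_abs, abs_of_pos hh]
      simp [one_div]
    have hexp := norm_exp_I_mul_ofReal hbar (∑ i, z.2 i * y i)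
    calc ‖φ y * _‖ = ‖φ y‖ * ‖_‖ := norm_mul _ _
      _ ≤ ‖φ y‖ * (Md * ‖v‖ + Mψ * (hbar⁻¹ * ((∑ i, |y i|) * ‖v‖))) := by
          apply mul_le_mul_of_nonneg_left _ (norm_nonneg _)
          refine (norm_add_le _ _).trans (add_le_add ?_ ?_)
          · rw [norm_mul, hexp, one_mul]
            exact ((fderiv ℝ (⇑ψ) (z.1 - y)).le_opNorm v.1).trans
              (mul_le_mul (hdψb _) (norm_fst_le v) (norm_nonneg _) hMd0.le)
          · rw [norm_mul, norm_mul, hexp, one_mul, norm_mul, hnormI,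
              Complex.norm_real]
            exact mul_le_mul (hψb _)
              (mul_le_mul_of_nonneg_left (norm_Tlin_apply_le y v) (inv_nonneg.2 hh.le))
              (by positivity) hMψ0.le
      _ = bound y * ‖v‖ := by
          have hs : (∑ i, (|y i| * ‖φ y‖)) = (∑ i, |y i|) * ‖φ y‖ :=
            (Finset.sum_mul _ _ _).symm
          simp only [hbound_def, hs]
          ring
  have hbound_int : Integrable bound volume := by
    have h1 : Integrable (fun y : Fin n → ℝ => Md * ‖φ y‖) volume :=
      (φ.integrable (μ := volume)).norm.const_mul Md
    have h2 : ∀ i : Fin n, Integrable (fun y : Fin n → ℝ => |y i| * ‖φ y‖) volume := by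
      intro i
      refine (φ.integrable_pow_mul volume 1).mono'
        ((continuous_apply i).abs.mul contφ.norm).aestronglyMeasurable
        (ae_of_all _ fun y => ?_)
      simp only [Real.norm_eq_abs, abs_mul, abs_abs, abs_norm, pow_one]
      refine mul_le_mul_of_nonneg_right ?_ (norm_nonneg _)
      simpa using (norm_le_pi_norm y i : |y i| ≤ ‖y‖)
    exact h1.add ((integrable_finset_sum _ (fun i _ => h2 i)).const_mul _)
  have hF_int : ∀ z, Integrable (Fint hbar (⇑φ) (⇑ψ) z) volume := by
    intro z
    refine ((φ.integrable (μ := volume)).norm.const_mul Mψ).mono'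
      (contF z).aestronglyMeasurable (ae_of_all _ fun y => ?_)
    have : ‖Fint hbar (⇑φ) (⇑ψ) z y‖ = ‖φ y‖ * ‖ψ (z.1 - y)‖ := by
      simp only [Fint, norm_mul, norm_exp_I_mul_ofReal, one_mul]
    rw [this]
    calc ‖φ y‖ * ‖ψ (z.1 - y)‖ ≤ ‖φ y‖ * Mψ :=
          mul_le_mul_of_nonneg_left (hψb _) (norm_nonneg _)
      _ = Mψ * ‖φ y‖ := mul_comm _ _
  have hyF_int : ∀ j : Fin n,
      Integrable (fun y => ((y j : ℝ) : ℂ) * Fint hbar (⇑φ) (⇑ψ) z₀ y) volume := by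
    intro j
    refine ((φ.integrable_pow_mul volume 1).const_mul Mψ).mono'
      ((Complex.continuous_ofReal.comp (continuous_apply j)).mul
        (contF z₀)).aestronglyMeasurable
      (ae_of_all _ fun y => ?_)
    have h1 : ‖((y j : ℝ) : ℂ) * Fint hbar (⇑φ) (⇑ψ) z₀ y‖
        = |y j| * (‖φ y‖ * ‖ψ (z₀.1 - y)‖) := by
      simp only [norm_mul, Complex.norm_real, Real.norm_eq_abs, Fint,
        norm_exp_I_mul_ofReal, one_mul, mul_assoc]
    rw [h1]
    calc |y j| * (‖φ y‖ * ‖ψ (z₀.1 - y)‖) ≤ ‖y‖ * (‖φ y‖ * Mψ) := by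
          refine mul_le_mul (by simpa using norm_le_pi_norm y j)
            (mul_le_mul_of_nonneg_left (hψb _) (norm_nonneg _))
            (by positivity) (norm_nonneg _)
      _ = Mψ * (‖y‖ ^ 1 * ‖φ y‖) := by ring
  have hFder_int : Integrable (Fder hbar (⇑φ) (⇑ψ) z₀) volume :=
    hbound_int.mono' contF'.aestronglyMeasurable
      (ae_of_all _ fun y => h_bound y z₀)
  refine ⟨hFder_int, hF_int z₀, hyF_int, ?_⟩
  exact hasFDerivAt_integral_of_dominated_of_fderiv_le (Metric.ball_mem_nhds z₀ one_pos)
    (Filter.Eventually.of_forall fun z => (contF z).aestronglyMeasurable)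
    (hF_int z₀) contF'.aestronglyMeasurable
    (ae_of_all _ fun y z _ => h_bound y z)
    hbound_int
    (ae_of_all _ fun y z _ => hasFDerivAt_Fint hbar (⇑φ) ψ z y)

lemma Fder_apply_p (hbar : ℝ) (φ ψ : (Fin n → ℝ) → ℂ)
    (z : (Fin n → ℝ) × (Fin n → ℝ)) (y : Fin n → ℝ) (j : Fin n) :
    Fder hbar φ ψ z y ((0 : Fin n → ℝ), Pi.single j 1)
      = (I / (hbar : ℂ)) * (((y j : ℝ) : ℂ) * Fint hbar φ ψ z y) := by
  simp [Fder, Fint, Tlin_apply_single, smul_eq_mul]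
  ring

lemma Fder_apply_x (hbar : ℝ) (φ ψ : (Fin n → ℝ) → ℂ)
    (z : (Fin n → ℝ) × (Fin n → ℝ)) (y : Fin n → ℝ) (j : Fin n) :
    Fder hbar φ ψ z y (Pi.single j 1, (0 : Fin n → ℝ))
      = φ y * (Complex.exp ((I / (hbar : ℂ)) * ((∑ i, z.2 i * y i : ℝ) : ℂ)) *
          fderiv ℝ ψ (z.1 - y) (Pi.single j 1)) := by
  simp [Fder, Tlin_apply_single', smul_eq_mul]

end VphiAux

open VphiAux in
/-- `V_φ` takes the usual quantization rules to the phase-space quantization rules: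
`(x_j/2 + iℏ∂_{p_j})(V_φψ) = V_φ(x_jψ)` and `(p_j/2 − iℏ∂_{x_j})(V_φψ) = V_φ(−iℏ∂_{x_j}ψ)`. -/
theorem Vphi_intertwines_quantization (n : ℕ) (hbar : ℝ) (hhbar : 0 < hbar)
    (φ ψ : SchwartzMap (Fin n → ℝ) ℂ) (j : Fin n)
    (z : (Fin n → ℝ) × (Fin n → ℝ)) :
    (((z.1 j / 2 : ℝ) : ℂ) * Vphi n hbar (⇑φ) (⇑ψ) z
        + I * (hbar : ℂ) * fderiv ℝ (Vphi n hbar (⇑φ) (⇑ψ)) z (0, Pi.single j 1)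
      = Vphi n hbar (⇑φ) (fun x' => ((x' j : ℝ) : ℂ) * ψ x') z)
    ∧ (((z.2 j / 2 : ℝ) : ℂ) * Vphi n hbar (⇑φ) (⇑ψ) z
        - I * (hbar : ℂ) * fderiv ℝ (Vphi n hbar (⇑φ) (⇑ψ)) z (Pi.single j 1, 0)
      = Vphi n hbar (⇑φ) (fun x' => -(I * (hbar : ℂ)) * fderiv ℝ (⇑ψ) x' (Pi.single j 1)) z) := by
  obtain ⟨hFder, hFint, hyFint, hJ⟩ := key hbar hhbar φ ψ z
  have hb : (hbar : ℂ) ≠ 0 := by exact_mod_cast hhbar.ne'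
  have hB := hasFDerivAt_B (n := n) z
  have hB2 := (Complex.ofRealCLM.hasFDerivAt (x := (∑ i, z.2 i * z.1 i : ℝ))).comp z hB
  have hB3 := hB2.const_mul (-(I / (2 * (hbar : ℂ))))
  have hE := hB3.cexp
  have hCJ := hJ.const_mul ((((1 / (2 * π * hbar)) ^ ((n : ℝ) / 2) : ℝ) : ℂ))
  have hfun : Vphi n hbar (⇑φ) (⇑ψ) = fun w =>
      Complex.exp (-(I / (2 * (hbar : ℂ))) * ((∑ i, w.2 i * w.1 i : ℝ) : ℂ)) *
        ((((1 / (2 * π * hbar)) ^ ((n : ℝ) / 2) : ℝ) : ℂ) *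
          ∫ y, Fint hbar (⇑φ) (⇑ψ) w y) :=
    funext fun w => Vphi_eq n hbar (⇑φ) (⇑ψ) w
  have hV := (hE.mul hCJ).congr_of_eventuallyEq
    (Filter.Eventually.of_forall fun w => Vphi_eq n hbar (⇑φ) (⇑ψ) w)
  have hfd := hV.fderiv
  rw [hfd]
  constructor
  · rw [Vphi_eq, Vphi_eq]
    simp only [ContinuousLinearMap.add_apply, ContinuousLinearMap.smul_apply,
      ContinuousLinearMap.coe_comp', Function.comp_apply, Complex.ofRealCLM_apply,
      smul_eq_mul, Blin_apply_single,
      ContinuousLinearMap.integral_apply hFder]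
    have hJdef : (∫ (y : Fin n → ℝ),
        φ y * (cexp (I / ↑hbar * ↑(∑ i, z.2 i * y i)) * ψ (z.1 - y)))
        = ∫ y, Fint hbar (⇑φ) (⇑ψ) z y := rfl
    have hK : (∫ y, Fder hbar (⇑φ) (⇑ψ) z y ((0 : Fin n → ℝ), Pi.single j 1))
        = (I / (hbar : ℂ)) * ∫ y, ((y j : ℝ) : ℂ) * Fint hbar (⇑φ) (⇑ψ) z y := by
      rw [← integral_const_mul]
      exact congrArg (fun f : (Fin n → ℝ) → ℂ => ∫ y, f y)
        (funext fun y => Fder_apply_p hbar (⇑φ) (⇑ψ) z y j)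
    have hR : (∫ (y : Fin n → ℝ),
        φ y * (cexp (I / ↑hbar * ↑(∑ i, z.2 i * y i)) * ((((z.1 - y) j : ℝ) : ℂ) * ψ (z.1 - y))))
        = ((z.1 j : ℝ) : ℂ) * (∫ y, Fint hbar (⇑φ) (⇑ψ) z y)
          - ∫ y, ((y j : ℝ) : ℂ) * Fint hbar (⇑φ) (⇑ψ) z y := by
      have h1 : (fun y : Fin n → ℝ =>
          φ y * (cexp (I / ↑hbar * ↑(∑ i, z.2 i * y i)) * ((((z.1 - y) j : ℝ) : ℂ) * ψ (z.1 - y))))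
          = fun y => ((z.1 j : ℝ) : ℂ) * Fint hbar (⇑φ) (⇑ψ) z y
            - ((y j : ℝ) : ℂ) * Fint hbar (⇑φ) (⇑ψ) z y := by
        funext y
        simp only [Fint, Pi.sub_apply, Complex.ofReal_sub]
        ring
      rw [h1, integral_sub (hFint.const_mul _) (hyFint j), integral_const_mul]
    rw [hJdef, hK, hR]
    have hhh : (hbar : ℂ) / (hbar : ℂ) = 1 := div_self hb
    set Ez := cexp (-(I / (2 * (hbar:ℂ))) * ↑(∑ i, z.2 i * z.1 i))
    set Cc := ((((1 / (2 * π * hbar)) ^ ((n:ℝ) / 2) : ℝ)) : ℂ)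
    set Jz := ∫ y, Fint hbar (⇑φ) (⇑ψ) z y
    set Kz := ∫ y, ((y j : ℝ) : ℂ) * Fint hbar (⇑φ) (⇑ψ) z y
    push_cast
    linear_combination (Ez * Cc * (Kz - (z.1 j : ℂ) * Jz / 2)) * Complex.I_sq +
      (I * I * Ez * Cc * (Kz - (z.1 j : ℂ) * Jz / 2)) * hhh
  · rw [Vphi_eq, Vphi_eq]
    simp only [ContinuousLinearMap.add_apply, ContinuousLinearMap.smul_apply,
      ContinuousLinearMap.coe_comp', Function.comp_apply, Complex.ofRealCLM_apply,
      smul_eq_mul, Blin_apply_single',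
      ContinuousLinearMap.integral_apply hFder]
    have hJdef : (∫ (y : Fin n → ℝ),
        φ y * (cexp (I / ↑hbar * ↑(∑ i, z.2 i * y i)) * ψ (z.1 - y)))
        = ∫ y, Fint hbar (⇑φ) (⇑ψ) z y := rfl
    have hK : (∫ y, Fder hbar (⇑φ) (⇑ψ) z y (Pi.single j 1, (0 : Fin n → ℝ)))
        = ∫ y, φ y * (cexp (I / ↑hbar * ↑(∑ i, z.2 i * y i)) *
            fderiv ℝ (⇑ψ) (z.1 - y) (Pi.single j 1)) := by
      exact congrArg (fun f : (Fin n → ℝ) → ℂ => ∫ y, f y)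
        (funext fun y => Fder_apply_x hbar (⇑φ) (⇑ψ) z y j)
    have hR : (∫ (y : Fin n → ℝ),
        φ y * (cexp (I / ↑hbar * ↑(∑ i, z.2 i * y i)) *
          (-(I * (hbar : ℂ)) * fderiv ℝ (⇑ψ) (z.1 - y) (Pi.single j 1))))
        = -(I * (hbar : ℂ)) * ∫ y, φ y * (cexp (I / ↑hbar * ↑(∑ i, z.2 i * y i)) *
            fderiv ℝ (⇑ψ) (z.1 - y) (Pi.single j 1)) := by
      rw [← integral_const_mul]
      exact congrArg (fun f : (Fin n → ℝ) → ℂ => ∫ y, f y)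
        (funext fun y => by ring)
    rw [hJdef, hK, hR]
    have hhh : (hbar : ℂ) / (hbar : ℂ) = 1 := div_self hb
    set Ez := cexp (-(I / (2 * (hbar:ℂ))) * ↑(∑ i, z.2 i * z.1 i))
    set Cc := ((((1 / (2 * π * hbar)) ^ ((n:ℝ) / 2) : ℝ)) : ℂ)
    set Jz := ∫ y, Fint hbar (⇑φ) (⇑ψ) z y
    set Dz := ∫ y, φ y * (cexp (I / ↑hbar * ↑(∑ i, z.2 i * y i)) *
        fderiv ℝ (⇑ψ) (z.1 - y) (Pi.single j 1))
    push_cast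
    linear_combination (Ez * Cc * (z.2 j : ℂ) * Jz / 2) * Complex.I_sq +
      (I * I * Ez * Cc * (z.2 j : ℂ) * Jz / 2) * hhh
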